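/- arXiv:2404.14245 — 2 statements merged into one kernel-verified Lean document; each statement's English description precedes it below -/
import Mathlib

section
/- Let k ≥ 1 and A ∈ Matrix (Fin k) (Fin k) ℕ, and let u, v ∈ Fin k. Then the function n ↦ (A^n)_{u,v} is an ultimately almost PORC function. -/
/-- `g ∈ 2^{Θ(n)}` for a rational-valued function: there are real constants
`γ₁, γ₂ > 0` and `N'` with `2^{γ₁ n} ≤ g n ≤ 2^{γ₂ n}` for all `n ≥ N'`. -/
def ExpThetaQ (g : ℕ → ℚ) : Prop :=
  ∃ (γ₁ γ₂ : ℝ), 0 < γ₁ ∧ 0 < γ₂ ∧ ∃ N' : ℕ, ∀ n : ℕ, N' ≤ n →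
    (2 : ℝ) ^ (γ₁ * n) ≤ ((g n : ℚ) : ℝ) ∧ ((g n : ℚ) : ℝ) ≤ (2 : ℝ) ^ (γ₂ * n)

/-- `f : ℕ → ℕ` is an ultimately almost PORC function: there are a quasiperiod
`p ≥ 1`, an offset `N`, and constituents `c 0, …, c (p-1) : ℕ → ℚ`, each either a
polynomial with rational coefficients or a function in `2^{Θ(n)}`, such that
`f n = c (n mod p) n` for all `n ≥ N`. -/
def UltAlmostPORC (f : ℕ → ℕ) : Prop :=
  ∃ (p : ℕ), 1 ≤ p ∧ ∃ (N : ℕ) (c : ℕ → ℕ → ℚ),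
    (∀ i : ℕ, i < p →
      (∃ q : Polynomial ℚ, ∀ n : ℕ, c i n = q.eval (n : ℚ)) ∨ ExpThetaQ (c i)) ∧
    ∀ n : ℕ, N ≤ n → (f n : ℚ) = c (n % p) n

namespace PORCAux

open Matrix Polynomial Finset

variable {k : ℕ}

lemma mul_entry_le (P Q : Matrix (Fin k) (Fin k) ℕ) (x z y : Fin k) :
    P x z * Q z y ≤ (P * Q) x y := by
  rw [Matrix.mul_apply]
  exact Finset.single_le_sum (f := fun j => P x j * Q j y) (fun i _ => Nat.zero_le _) (Finset.mem_univ z)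

lemma pow_add_entry_le (M : Matrix (Fin k) (Fin k) ℕ) (a b : ℕ) (x z y : Fin k) :
    (M ^ a) x z * (M ^ b) z y ≤ (M ^ (a + b)) x y := by
  rw [pow_add]; exact mul_entry_le _ _ _ _ _

lemma diag_pow_le (M : Matrix (Fin k) (Fin k) ℕ) (t s : ℕ) (x : Fin k) :
    ((M ^ t) x x) ^ s ≤ (M ^ (t * s)) x x := by
  induction s with
  | zero => simp [Matrix.one_apply]
  | succ s ih =>
      calc ((M ^ t) x x) ^ (s + 1) = ((M ^ t) x x) ^ s * (M ^ t) x x := pow_succ _ _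
        _ ≤ (M ^ (t * s)) x x * (M ^ t) x x := Nat.mul_le_mul_right _ ih
        _ ≤ (M ^ (t * s + t)) x x := pow_add_entry_le ..
        _ = (M ^ (t * (s + 1))) x x := by ring_nf

lemma diag_one_le (M : Matrix (Fin k) (Fin k) ℕ) (x : Fin k) (h : 1 ≤ M x x) (m : ℕ) :
    1 ≤ (M ^ m) x x := by
  have := diag_pow_le M 1 m x
  simp only [pow_one, one_mul] at this
  exact le_trans (Nat.one_le_iff_ne_zero.mpr (pow_ne_zero m (by omega))) this


lemma pow_entry_pos_iff (M : Matrix (Fin k) (Fin k) ℕ) (L : ℕ) (x y : Fin k) :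
    1 ≤ (M ^ L) x y ↔
      ∃ s : ℕ → Fin k, s 0 = x ∧ s L = y ∧ ∀ r < L, 1 ≤ M (s r) (s (r + 1)) := by
  induction L generalizing y with
  | zero =>
      simp only [pow_zero, Matrix.one_apply]
      constructor
      · intro h
        have hxy : x = y := by by_contra hne; simp [hne] at h
        exact ⟨fun _ => x, rfl, hxy, fun r hr => absurd hr (Nat.not_lt_zero r)⟩
      · rintro ⟨s, h0, hL, _⟩
        have : x = y := by rw [← h0, ← hL]
        simp [this]
  | succ L ih =>
      have hmul : (M ^ (L + 1)) x y = ∑ z, (M ^ L) x z * M z y := by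
        rw [pow_succ, Matrix.mul_apply]
      constructor
      · intro h
        rw [hmul] at h
        have hne : ∃ z, (M ^ L) x z * M z y ≠ 0 := by
          by_contra hall
          push_neg at hall
          have : ∑ z, (M ^ L) x z * M z y = 0 := Finset.sum_eq_zero fun z _ => hall z
          omega
        obtain ⟨z, hz⟩ := hne
        have h1 : 1 ≤ (M ^ L) x z := by
          rcases Nat.eq_zero_or_pos ((M ^ L) x z) with h | h
          · simp [h] at hz
          · exact h
        have h2 : 1 ≤ M z y := by
          rcases Nat.eq_zero_or_pos (M z y) with h | h
          · simp [h] at hz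
          · exact h
        obtain ⟨s, hs0, hsL, hse⟩ := (ih z).mp h1
        refine ⟨fun r => if r = L + 1 then y else s r, by simp [hs0], by simp, ?_⟩
        intro r hr
        rcases Nat.lt_or_ge r L with h' | h'
        · have h1' : r ≠ L + 1 := by omega
          have h2' : r + 1 ≠ L + 1 := by omega
          simp only []
          rw [if_neg h1', if_neg h2']
          exact hse r h'
        · have hrL : r = L := by omega
          subst hrL
          have h1' : r ≠ r + 1 := by omega
          simp only []
          rw [if_neg h1']
          simp only [if_true]
          rw [hsL]
          exact h2
      · rintro ⟨s, hs0, hsL, hse⟩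
        have h1 : 1 ≤ (M ^ L) x (s L) := (ih (s L)).mpr ⟨s, hs0, rfl, fun r hr => hse r (by omega)⟩
        have h2 : 1 ≤ M (s L) y := by
          have := hse L (Nat.lt_succ_self L)
          rwa [hsL] at this
        rw [hmul]
        calc 1 ≤ (M ^ L) x (s L) * M (s L) y := Nat.one_le_iff_ne_zero.mpr (by positivity)
          _ ≤ ∑ z, (M ^ L) x z * M z y :=
            Finset.single_le_sum (f := fun z => (M ^ L) x z * M z y)
              (fun i _ => Nat.zero_le _) (Finset.mem_univ _)


lemma shorten (M : Matrix (Fin k) (Fin k) ℕ) (x : Fin k) (L : ℕ)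
    (IH : ∀ L' < L, 1 ≤ L' → 1 ≤ (M ^ L') x x → ∃ ℓ, 1 ≤ ℓ ∧ ℓ ≤ k ∧ 1 ≤ (M ^ ℓ) x x)
    (hkL : k < L) (s : ℕ → Fin k) (hs0 : s 0 = x) (hsL : s L = x)
    (hse : ∀ r < L, 1 ≤ M (s r) (s (r + 1)))
    (i j : ℕ) (hij : i < j) (hjk : j ≤ k) (hs : s i = s j) :
    ∃ ℓ, 1 ≤ ℓ ∧ ℓ ≤ k ∧ 1 ≤ (M ^ ℓ) x x := by
  set d := j - i with hd
  have hd1 : 1 ≤ d := by omega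
  have hdk : d ≤ k := by omega
  set L' := L - d with hL'def
  have hL'1 : 1 ≤ L' := by omega
  have hL'i : i < L' := by omega
  have hL'd : L' + d = L := by omega
  have hwalk : 1 ≤ (M ^ L') x x := by
    refine (pow_entry_pos_iff M L' x x).mpr
      ⟨fun r => if r ≤ i then s r else s (r + d), by simp [hs0], ?_, ?_⟩
    · have : ¬ (L' ≤ i) := by omega
      simp only [this, if_false, hL'd, hsL]
    · intro r hr
      rcases Nat.lt_trichotomy r i with h | h | h
      · have e1 : r ≤ i := by omega
        have e2 : r + 1 ≤ i := by omega
        simp only [e1, if_true, e2]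
        exact hse r (by omega)
      · subst h
        have e1 : r ≤ r := le_refl r
        have e2 : ¬ (r + 1 ≤ r) := by omega
        simp only [e1, if_true, e2, if_false]
        have : r + 1 + d = j + 1 := by omega
        rw [this, hs]
        exact hse j (by omega)
      · have e1 : ¬ (r ≤ i) := by omega
        have e2 : ¬ (r + 1 ≤ i) := by omega
        simp only [e1, e2, if_false]
        have : r + 1 + d = r + d + 1 := by omega
        rw [this]
        exact hse (r + d) (by omega)
  exact IH L' (by omega) hL'1 hwalk

lemma short_cycle (M : Matrix (Fin k) (Fin k) ℕ) (x : Fin k) :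
    ∀ L, 1 ≤ L → 1 ≤ (M ^ L) x x → ∃ ℓ, 1 ≤ ℓ ∧ ℓ ≤ k ∧ 1 ≤ (M ^ ℓ) x x := by
  intro L
  induction L using Nat.strong_induction_on with
  | _ L IH =>
    intro hL1 hL
    rcases Nat.lt_or_ge k L with hkL | hLk
    · -- L > k, shorten
      obtain ⟨s, hs0, hsL, hse⟩ := (pow_entry_pos_iff M L x x).mp hL
      have hcard : Fintype.card (Fin k) < Fintype.card (Fin (k + 1)) := by simp
      obtain ⟨a, b, hab, hfab⟩ :=
        Fintype.exists_ne_map_eq_of_card_lt (fun r : Fin (k + 1) => s r) hcard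
      have hv : (a : ℕ) ≠ (b : ℕ) := fun h => hab (Fin.ext h)
      rcases Nat.lt_or_ge (a : ℕ) (b : ℕ) with h | h
      · exact shorten M x L IH hkL s hs0 hsL hse a.1 b.1 h (by omega) hfab
      · exact shorten M x L IH hkL s hs0 hsL hse b.1 a.1 (by omega) (by omega) hfab.symm
    · exact ⟨L, hL1, hLk, hL⟩


lemma global_bound (A : Matrix (Fin k) (Fin k) ℕ) :
    ∃ B : ℕ, 1 ≤ B ∧ ∀ n x y, (A ^ n) x y ≤ B ^ n := by
  set S := (Finset.univ.sup fun q : Fin k × Fin k => A q.1 q.2) + 1 with hS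
  refine ⟨(k + 1) * S, Nat.one_le_iff_ne_zero.mpr (by positivity), ?_⟩
  intro n
  induction n with
  | zero =>
      intro x y
      rcases eq_or_ne x y with h | h <;> simp [Matrix.one_apply, h]
  | succ n ih =>
      intro x y
      have hAB : ∀ z w : Fin k, A z w ≤ S := by
        intro z w
        have h' : A z w ≤ Finset.univ.sup fun q : Fin k × Fin k => A q.1 q.2 := by
          simpa using Finset.le_sup (f := fun q : Fin k × Fin k => A q.1 q.2)
            (Finset.mem_univ (z, w))
        omega
      calc (A ^ (n + 1)) x y = ∑ z, (A ^ n) x z * A z y := by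
            rw [pow_succ, Matrix.mul_apply]
        _ ≤ ∑ _z : Fin k, ((k + 1) * S) ^ n * S :=
            Finset.sum_le_sum fun z _ => Nat.mul_le_mul (ih x z) (hAB z y)
        _ = (k * S) * ((k + 1) * S) ^ n := by
            rw [Finset.sum_const, Finset.card_univ, Fintype.card_fin]; ring
        _ ≤ ((k + 1) * S) * ((k + 1) * S) ^ n :=
            Nat.mul_le_mul_right _ (Nat.mul_le_mul_right _ (Nat.le_succ k))
        _ = ((k + 1) * S) ^ (n + 1) := by ring

lemma entry_pow_nonneg_le {P Q : Matrix (Fin k) (Fin k) ℚ}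
    (hP : ∀ x y, 0 ≤ P x y) (hPQ : ∀ x y, P x y ≤ Q x y) (m : ℕ) :
    ∀ x y, 0 ≤ (P ^ m) x y ∧ (P ^ m) x y ≤ (Q ^ m) x y := by
  induction m with
  | zero =>
      intro x y
      rcases eq_or_ne x y with h | h <;> simp [Matrix.one_apply, h]
  | succ m ih =>
      intro x y
      rw [pow_succ, pow_succ, Matrix.mul_apply, Matrix.mul_apply]
      constructor
      · exact Finset.sum_nonneg fun z _ => mul_nonneg (ih x z).1 (hP z y)
      · refine Finset.sum_le_sum fun z _ => ?_
        exact mul_le_mul (ih x z).2 (hPQ z y) (hP z y) (le_trans (ih x z).1 (ih x z).2)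

lemma cast_pow_entry (M : Matrix (Fin k) (Fin k) ℕ) (n : ℕ) (x y : Fin k) :
    (((M ^ n) x y : ℕ) : ℚ) = ((M.map (Nat.cast : ℕ → ℚ)) ^ n) x y := by
  have h : (M.map (Nat.cast : ℕ → ℚ)) = (Nat.castRingHom ℚ).mapMatrix M := rfl
  rw [h, ← map_pow]
  simp [RingHom.mapMatrix_apply, Matrix.map_apply]


lemma one_le_mul' {a b : ℕ} (ha : 1 ≤ a) (hb : 1 ≤ b) : 1 ≤ a * b :=
  Nat.one_le_iff_ne_zero.mpr (by positivity)


lemma exp_branch (A : Matrix (Fin k) (Fin k) ℕ) (u v : Fin k) (i : ℕ) (hip : i < (Nat.factorial k))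
    (x : Fin k) (a b t : ℕ) (ht : 1 ≤ t)
    (hax : 1 ≤ (A ^ (i + (Nat.factorial k) * a)) u x) (hxb : 1 ≤ (A ^ ((Nat.factorial k) * b)) x v)
    (ht2 : 2 ≤ (A ^ ((Nat.factorial k) * t)) x x)
    (hloop : 1 ≤ (A ^ (Nat.factorial k)) x x)
    (B : ℕ) (hB1 : 1 ≤ B) (hBbd : ∀ n x y, (A ^ n) x y ≤ B ^ n) :
    ExpThetaQ (fun n => if n % (Nat.factorial k) = i then (((A ^ n) u v : ℕ) : ℚ) else 2 ^ n) := by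
  set p := (Nat.factorial k) with hpdef
  have hp : 1 ≤ p := Nat.factorial_pos k
  -- growth lemma
  have grow : ∀ m, a + b ≤ m → 2 ^ ((m - (a + b)) / t) ≤ (A ^ (i + p * m)) u v := by
    intro m hm
    set s := (m - (a + b)) / t with hs
    set r := (m - (a + b)) % t with hr
    have hsr : m = a + (t * s + r) + b := by
      have hd := Nat.div_add_mod (m - (a + b)) t
      rw [← hs, ← hr] at hd
      obtain ⟨w, hw⟩ : ∃ w, t * s = w := ⟨_, rfl⟩
      rw [hw] at hd ⊢
      omega
    have g1 : 2 ^ s ≤ (A ^ (p * (t * s))) x x := by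
      calc 2 ^ s ≤ ((A ^ (p * t)) x x) ^ s := Nat.pow_le_pow_left ht2 s
        _ ≤ (A ^ (p * t * s)) x x := diag_pow_le ..
        _ = (A ^ (p * (t * s))) x x := by rw [mul_assoc]
    have g2 : 1 ≤ (A ^ (p * r)) x x := by
      calc 1 ≤ ((A ^ p) x x) ^ r := Nat.one_le_iff_ne_zero.mpr (pow_ne_zero r (by omega))
        _ ≤ (A ^ (p * r)) x x := diag_pow_le ..
    calc 2 ^ s = 1 * 2 ^ s * 1 * 1 := by ring
      _ ≤ (A ^ (i + p * a)) u x * ((A ^ (p * (t * s))) x x) * ((A ^ (p * r)) x x)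
          * ((A ^ (p * b)) x v) := by
        exact Nat.mul_le_mul (Nat.mul_le_mul (Nat.mul_le_mul hax g1) g2) hxb
      _ ≤ (A ^ (i + p * a + p * (t * s))) u x * ((A ^ (p * r)) x x) * ((A ^ (p * b)) x v) := by
        exact Nat.mul_le_mul_right _ (Nat.mul_le_mul_right _ (pow_add_entry_le ..))
      _ ≤ (A ^ (i + p * a + p * (t * s) + p * r)) u x * ((A ^ (p * b)) x v) := by
        exact Nat.mul_le_mul_right _ (pow_add_entry_le ..)
      _ ≤ (A ^ (i + p * a + p * (t * s) + p * r + p * b)) u v := pow_add_entry_le ..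
      _ = (A ^ (i + p * m)) u v := by rw [hsr]; ring_nf
  -- choose constants
  have hp0 : 0 < p := hp
  have hpR : (0:ℝ) < p := by exact_mod_cast hp
  have htR : (0:ℝ) < t := by exact_mod_cast ht
  have hBR : (1:ℝ) ≤ B := by exact_mod_cast hB1
  have h2pt : (0:ℝ) < 2 * p * t := mul_pos (mul_pos two_pos hpR) htR
  have hp1R : (1:ℝ) ≤ p := by exact_mod_cast hp
  have ht1R : (1:ℝ) ≤ t := by exact_mod_cast ht
  refine ⟨1 / (2 * p * t), B, div_pos one_pos h2pt, by linarith, 2 * p * (a + b + t + 1), ?_⟩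
  intro n hn
  have hstep : 0 < 2 * p * (a + b + t + 1) :=
    Nat.mul_pos (Nat.mul_pos (by norm_num) hp0) (by omega)
  have hn1 : 1 ≤ n := le_trans hstep hn
  have hγ1 : (1:ℝ) / (2 * p * t) ≤ 1 := by
    rw [div_le_one h2pt]
    nlinarith
  have hupper : ∀ g : ℝ, g ≤ (B:ℝ) ^ n → g ≤ (2:ℝ) ^ ((B:ℝ) * n) := by
    intro g hg
    refine hg.trans ?_
    have h2B : (B:ℝ) ≤ (2:ℝ) ^ (B:ℝ) := by
      have h1 : (B:ℝ) ≤ (2:ℝ) ^ (B:ℕ) := by exact_mod_cast (Nat.lt_two_pow_self (n := B)).le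
      rwa [← Real.rpow_natCast 2 B] at h1
    calc (B:ℝ)^n ≤ ((2:ℝ) ^ (B:ℝ)) ^ n := pow_le_pow_left₀ (by positivity) h2B n
      _ = (2:ℝ) ^ ((B:ℝ) * n) := by
          rw [← Real.rpow_natCast ((2:ℝ) ^ (B:ℝ)) n, ← Real.rpow_mul (by norm_num)]
  by_cases hni : n % p = i
  · simp only [hni, if_pos]
    constructor
    · -- lower bound in the exponential class
      set m := n / p with hm
      have hnm : n = i + p * m := by
        conv_lhs => rw [← Nat.mod_add_div n p]
        rw [hni, hm]
      have hm2 : 2 * (a + b + t + 1) ≤ m := by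
        have h1 : (2 * (a + b + t + 1)) * p ≤ n := by
          calc (2 * (a + b + t + 1)) * p = 2 * p * (a + b + t + 1) := by ring
            _ ≤ n := hn
        exact (Nat.le_div_iff_mul_le hp0).mpr h1
      have hab : a + b ≤ m := by omega
      set s := (m - (a + b)) / t with hs
      have hfl : 2 ^ s ≤ (A ^ n) u v := by
        have := grow m hab
        rwa [← hnm] at this
      have hm1 : m + 1 ≤ a + b + t * s + t := by
        have hd := Nat.div_add_mod (m - (a + b)) t
        rw [← hs] at hd
        have hr := Nat.mod_lt (m - (a + b)) (show 0 < t by omega)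
        obtain ⟨w, hw⟩ : ∃ w, t * s = w := ⟨_, rfl⟩
        rw [hw] at hd ⊢
        omega
      -- real arithmetic
      have hm1R : ((m:ℝ) + 1) ≤ a + b + t * s + t := by exact_mod_cast hm1
      have hmulR : (p:ℝ) * (m + 1) ≤ p * (a + b + t * s + t) :=
        mul_le_mul_of_nonneg_left hm1R hpR.le
      have hnmR : (n:ℝ) = i + p * m := by exact_mod_cast hnm
      have hipR : (i:ℝ) + 1 ≤ p := by exact_mod_cast hip
      have hnR : 2 * (p:ℝ) * (a + b + t + 1) ≤ n := by exact_mod_cast hn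
      have hkey : (n:ℝ) ≤ 2 * p * t * s := by nlinarith
      have hexp : 1 / (2 * (p:ℝ) * t) * n ≤ (s:ℕ) := by
        rw [div_mul_eq_mul_div, one_mul, div_le_iff₀ (by positivity)]
        nlinarith
      calc (2:ℝ) ^ (1 / (2 * (p:ℝ) * t) * n) ≤ (2:ℝ) ^ ((s:ℕ):ℝ) :=
            Real.rpow_le_rpow_of_exponent_le one_le_two hexp
        _ = ((2 ^ s : ℕ) : ℝ) := by
            rw [Real.rpow_natCast]; push_cast; ring
        _ ≤ ((((A ^ n) u v : ℕ) : ℚ) : ℝ) := by exact_mod_cast hfl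
    · -- upper bound
      refine hupper _ ?_
      have := hBbd n u v
      exact_mod_cast this
  · simp only [hni, if_neg, if_false]
    have hcast : (((2 ^ n : ℚ)) : ℝ) = (2:ℝ) ^ (n:ℕ) := by push_cast; ring
    rw [hcast]
    constructor
    · calc (2:ℝ) ^ (1 / (2 * (p:ℝ) * t) * n) ≤ (2:ℝ) ^ ((n:ℕ):ℝ) := by
            refine Real.rpow_le_rpow_of_exponent_le one_le_two ?_
            calc 1 / (2 * (p:ℝ) * t) * n ≤ 1 * n :=
                  mul_le_mul_of_nonneg_right hγ1 (by positivity)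
              _ = (n:ℝ) := one_mul _
        _ = (2:ℝ) ^ (n:ℕ) := Real.rpow_natCast 2 n
    · rw [← Real.rpow_natCast 2 n]
      refine Real.rpow_le_rpow_of_exponent_le one_le_two ?_
      have h0n : (0:ℝ) ≤ (n:ℝ) := by positivity
      calc ((n:ℕ):ℝ) = 1 * (n:ℝ) := (one_mul _).symm
        _ ≤ (B:ℝ) * n := mul_le_mul_of_nonneg_right hBR h0n


lemma poly_branch (A : Matrix (Fin k) (Fin k) ℕ) (u v : Fin k) (i : ℕ)
    (hdiag : ∀ x : Fin k,
      ((∃ a, 1 ≤ (A ^ (i + Nat.factorial k * a)) u x) ∧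
        (∃ b, 1 ≤ ((A ^ Nat.factorial k) ^ b) x v)) →
      ∀ t, 1 ≤ t → ((A ^ Nat.factorial k) ^ t) x x ≤ 1)
    (hloop : ∀ x : Fin k, ∀ T, 1 ≤ T → 1 ≤ ((A ^ Nat.factorial k) ^ T) x x →
      1 ≤ (A ^ Nat.factorial k) x x) :
    ∃ q : Polynomial ℚ, ∀ m, k ≤ m →
      (((A ^ (i + Nat.factorial k * m)) u v : ℕ) : ℚ) = q.eval (m : ℚ) := by
  classical
  set p := Nat.factorial k with hpdef
  set C := A ^ p with hCdef
  set Ru : Fin k → Prop := fun x => ∃ a, 1 ≤ (A ^ (i + p * a)) u x with hRu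
  set Rv : Fin k → Prop := fun x => ∃ b, 1 ≤ (C ^ b) x v with hRv
  set R : Fin k → Prop := fun x => Ru x ∧ Rv x with hR
  set Cq : Matrix (Fin k) (Fin k) ℚ := C.map (Nat.cast : ℕ → ℚ) with hCq
  set E : Matrix (Fin k) (Fin k) ℚ :=
    Matrix.of (fun x y => if R x ∧ R y then ((C x y : ℕ) : ℚ) else 0) with hE
  have hEapp : ∀ x y, E x y = if R x ∧ R y then ((C x y : ℕ) : ℚ) else 0 := fun x y => rfl
  have hEnonneg : ∀ x y, 0 ≤ E x y := by
    intro x y; rw [hEapp]; split <;> positivity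
  have hEleC : ∀ x y, E x y ≤ Cq x y := by
    intro x y
    rw [hEapp]
    have : Cq x y = ((C x y : ℕ) : ℚ) := rfl
    rw [this]
    split
    · exact le_refl _
    · positivity
  have closure_Ru : ∀ x z m, Ru x → 1 ≤ (C ^ m) x z → Ru z := by
    rintro x z m ⟨a, ha⟩ hm
    refine ⟨a + m, ?_⟩
    have h2 : 1 ≤ (A ^ (p * m)) x z := by rw [pow_mul, ← hCdef]; exact hm
    have h1 : (A ^ (i + p * a)) u x * (A ^ (p * m)) x z ≤ (A ^ (i + p * a + p * m)) u z :=
      pow_add_entry_le ..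
    have he : i + p * a + p * m = i + p * (a + m) := by ring
    rw [he] at h1
    exact le_trans (one_le_mul' ha h2) h1
  have closure_Rv : ∀ z y m, 1 ≤ (C ^ m) z y → Rv y → Rv z := by
    rintro z y m hm ⟨b, hb⟩
    exact ⟨m + b, le_trans (one_le_mul' hm hb) (pow_add_entry_le C m b z y v)⟩
  have hvRv : Rv v := ⟨0, by simp [Matrix.one_apply]⟩
  -- E-powers agree with C-powers between Ru and Rv
  have F1 : ∀ m x y, Ru x → Rv y → (E ^ m) x y = (((C ^ m) x y : ℕ) : ℚ) := by
    intro m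
    induction m with
    | zero =>
        intro x y _ _
        rcases eq_or_ne x y with h | h <;> simp [Matrix.one_apply, h]
    | succ m ih =>
        intro x y hx hy
        rw [pow_succ', Matrix.mul_apply]
        have hCside : (((C ^ (m + 1)) x y : ℕ) : ℚ) =
            ∑ z, ((C x z : ℕ) : ℚ) * (((C ^ m) z y : ℕ) : ℚ) := by
          rw [pow_succ', Matrix.mul_apply]
          push_cast
          rfl
        rw [hCside]
        refine Finset.sum_congr rfl fun z _ => ?_
        rcases Nat.eq_zero_or_pos (C x z) with h0 | h1
        · have hE0 : E x z = 0 := by rw [hEapp]; split <;> simp [h0]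
          rw [hE0, h0]
          simp
        · rcases Nat.eq_zero_or_pos ((C ^ m) z y) with g0 | g1
          · have hEm0 : (E ^ m) z y = 0 := by
              have hle := (entry_pow_nonneg_le hEnonneg hEleC m) z y
              have hCq : (Cq ^ m) z y = (((C ^ m) z y : ℕ) : ℚ) := (cast_pow_entry C m z y).symm
              rw [hCq, g0] at hle
              have := hle.2
              simp at this
              linarith [hle.1, this]
            rw [hEm0, g0]
            simp
          · have hC1 : 1 ≤ (C ^ 1) x z := by rwa [pow_one]
            have hzR : R z := ⟨closure_Ru x z 1 hx hC1, closure_Rv z y m g1 hy⟩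
            have hxR : R x := ⟨hx, closure_Rv x z 1 hC1 hzR.2⟩
            have hE1 : E x z = ((C x z : ℕ) : ℚ) := by rw [hEapp, if_pos ⟨hxR, hzR⟩]
            rw [hE1, ih z y hzR.1 hy]
  -- entry formula
  have F2 : ∀ m, (((A ^ (i + p * m)) u v : ℕ) : ℚ) =
      ∑ x, (((A ^ i) u x : ℕ) : ℚ) * (E ^ m) x v := by
    intro m
    have hdecomp : (A ^ (i + p * m)) u v = ∑ x, (A ^ i) u x * (C ^ m) x v := by
      rw [pow_add, pow_mul, ← hCdef, Matrix.mul_apply]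
    rw [hdecomp]
    push_cast
    refine Finset.sum_congr rfl fun z _ => ?_
    rcases Nat.eq_zero_or_pos ((A ^ i) u z) with h0 | h1
    · rw [h0]; simp
    · have hz : Ru z := ⟨0, by simp only [mul_zero, add_zero]; exact h1⟩
      rw [F1 m z v hz hvRv]
  -- strict order
  set r : Fin k → Fin k → Prop :=
    fun x y => (R x ∧ R y) ∧ x ≠ y ∧ ∃ t, 1 ≤ t ∧ 1 ≤ (C ^ t) x y with hrdef
  have rtrans : ∀ x y z, r x y → r y z → r x z := by
    rintro x y z ⟨⟨hRx, hRy⟩, hxy, t, ht, hCt⟩ ⟨⟨_, hRz⟩, hyz, s, hs, hCs⟩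
    have hcomp : 1 ≤ (C ^ (t + s)) x z :=
      le_trans (one_le_mul' hCt hCs) (pow_add_entry_le C t s x y z)
    refine ⟨⟨hRx, hRz⟩, ?_, t + s, by omega, hcomp⟩
    rintro rfl
    have hCxx : 1 ≤ C x x := hloop x (t + s) (by omega) hcomp
    have hdx : ∀ m, 1 ≤ (C ^ m) x x := by
      intro m
      calc 1 ≤ (C x x) ^ m := Nat.one_le_iff_ne_zero.mpr (pow_ne_zero m (by omega))
        _ = ((C ^ 1) x x) ^ m := by rw [pow_one]
        _ ≤ (C ^ (1 * m)) x x := diag_pow_le ..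
        _ = (C ^ m) x x := by rw [one_mul]
    have hyx : 1 ≤ (C ^ (s + 1)) y x := by
      refine le_trans (one_le_mul' hCs hCxx) ?_
      have h := pow_add_entry_le C s 1 y x x
      rwa [pow_one] at h
    have htwo : 2 ≤ (C ^ (t + (s + 1))) x x := by
      have hpair : (C ^ t) x x * (C ^ (s+1)) x x + (C ^ t) x y * (C ^ (s+1)) y x
          ≤ (C ^ (t + (s+1))) x x := by
        have hrw : (C ^ (t + (s+1))) x x = ∑ z, (C ^ t) x z * (C ^ (s+1)) z x := by
          rw [pow_add, Matrix.mul_apply]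
        have hp2 : ∑ z ∈ ({x, y} : Finset (Fin k)), (C ^ t) x z * (C ^ (s+1)) z x
            = (C ^ t) x x * (C ^ (s+1)) x x + (C ^ t) x y * (C ^ (s+1)) y x :=
          Finset.sum_pair hxy
        rw [hrw, ← hp2]
        exact Finset.sum_le_sum_of_subset (Finset.subset_univ _)
      have h1 : 1 ≤ (C ^ t) x x * (C ^ (s+1)) x x := one_le_mul' (hdx t) (hdx (s+1))
      have h2 : 1 ≤ (C ^ t) x y * (C ^ (s+1)) y x := one_le_mul' hCt hyx
      omega
    have := hdiag x hRx (t + (s + 1)) (by omega)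
    omega
  have rirrefl : ∀ x, ¬ r x x := by rintro x ⟨_, hxx, _⟩; exact hxx rfl
  set ρ : Fin k → ℕ := fun x => (Finset.univ.filter (fun z => r z x)).card with hρ
  have ρmono : ∀ x y, r x y → ρ x < ρ y := by
    intro x y hxy
    apply Finset.card_lt_card
    rw [Finset.ssubset_iff_of_subset]
    · exact ⟨x, Finset.mem_filter.mpr ⟨Finset.mem_univ x, hxy⟩,
        fun hmem => rirrefl x (Finset.mem_filter.mp hmem).2⟩
    · intro z hz
      exact Finset.mem_filter.mpr ⟨Finset.mem_univ z,
        rtrans z x y (Finset.mem_filter.mp hz).2 hxy⟩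
  have hdiagC : ∀ x, R x → C x x ≤ 1 := by
    intro x hx
    have := hdiag x hx 1 le_rfl
    rwa [pow_one] at this
  set σ : Equiv.Perm (Fin k) := Tuple.sort ρ with hσ
  have hmono : Monotone (ρ ∘ σ) := Tuple.monotone_sort ρ
  set E' : Matrix (Fin k) (Fin k) ℚ := E.submatrix σ σ with hE'
  have htri : E'.BlockTriangular id := by
    intro a' b' hba
    show E (σ a') (σ b') = 0
    by_contra hne
    rw [hEapp] at hne
    have hRR : (R (σ a') ∧ R (σ b')) ∧ 1 ≤ C (σ a') (σ b') := by
      by_cases hcond : R (σ a') ∧ R (σ b')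
      · refine ⟨hcond, ?_⟩
        rw [if_pos hcond] at hne
        have h0 : C (σ a') (σ b') ≠ 0 := by exact_mod_cast hne
        omega
      · rw [if_neg hcond] at hne; exact absurd rfl hne
    rcases eq_or_ne (σ a') (σ b') with heq | hneq
    · have : a' = b' := σ.injective heq
      rw [this] at hba
      exact lt_irrefl _ hba
    · have hrab : r (σ a') (σ b') := ⟨hRR.1, hneq, 1, le_rfl, by rw [pow_one]; exact hRR.2⟩
      have h1 : ρ (σ a') < ρ (σ b') := ρmono _ _ hrab
      have h2 : ρ (σ b') ≤ ρ (σ a') := hmono (le_of_lt hba)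
      omega
  have hdiagE' : ∀ j, E' j j = 0 ∨ E' j j = 1 := by
    intro j
    show E (σ j) (σ j) = 0 ∨ E (σ j) (σ j) = 1
    rw [hEapp]
    by_cases hcond : R (σ j) ∧ R (σ j)
    · rw [if_pos hcond]
      have h1 := hdiagC (σ j) hcond.1
      interval_cases h : C (σ j) (σ j)
      · left; simp
      · right; simp
    · rw [if_neg hcond]; left; rfl
  -- Cayley-Hamilton
  have hz' : E' ^ k * (E' - 1) ^ k = 0 := by
    have hcp : E'.charpoly = ∏ j, (X - Polynomial.C (E' j j)) :=
      Matrix.charpoly_of_upperTriangular E' htri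
    have hdvd : E'.charpoly ∣ (X ^ k * (X - 1) ^ k : Polynomial ℚ) := by
      have hXk : (X ^ k * (X - 1) ^ k : Polynomial ℚ) = ∏ _j : Fin k, (X * (X - 1)) := by
        rw [Finset.prod_const, Finset.card_univ, Fintype.card_fin, mul_pow]
      rw [hcp, hXk]
      refine Finset.prod_dvd_prod_of_dvd _ _ fun j _ => ?_
      rcases hdiagE' j with h | h
      · rw [h]
        simpa using dvd_mul_right (X : Polynomial ℚ) (X - 1)
      · rw [h]
        have he : (X - Polynomial.C (1:ℚ)) = (X - 1 : Polynomial ℚ) := by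
          rw [Polynomial.C_1]
        rw [he]
        exact dvd_mul_left _ _
    obtain ⟨g, hg⟩ := hdvd
    have hch := Matrix.aeval_self_charpoly E'
    have h0 : Polynomial.aeval E' (X ^ k * (X - 1) ^ k : Polynomial ℚ) = 0 := by
      rw [hg, _root_.map_mul, hch, zero_mul]
    rw [_root_.map_mul, _root_.map_pow, _root_.map_pow, _root_.map_sub, Polynomial.aeval_X, _root_.map_one] at h0
    exact h0
  have hzE : E ^ k * (E - 1) ^ k = 0 := by
    have hEE' : (Matrix.reindexAlgEquiv ℚ ℚ σ.symm) E = E' := by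
      rw [Matrix.reindexAlgEquiv_apply, Matrix.reindex_apply, Equiv.symm_symm, hE']
    apply (Matrix.reindexAlgEquiv ℚ ℚ σ.symm).injective
    rw [_root_.map_zero, _root_.map_mul, _root_.map_pow, _root_.map_pow, _root_.map_sub, _root_.map_one, hEE', hz']
  have haev : Polynomial.aeval E (X ^ k * (X - 1) ^ k : Polynomial ℚ) = 0 := by
    rw [_root_.map_mul, _root_.map_pow, _root_.map_pow, _root_.map_sub, Polynomial.aeval_X, _root_.map_one, hzE]
  have key0 : ∀ g : Polynomial ℚ, Polynomial.aeval E (g * (X ^ k * (X - 1) ^ k)) = 0 := by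
    intro g; rw [_root_.map_mul, haev, mul_zero]
  have hco : IsCoprime ((X : Polynomial ℚ) ^ k) ((X - 1) ^ k) :=
    IsCoprime.pow ⟨1, -1, by ring⟩
  obtain ⟨α, β, hαβ⟩ := hco
  set Z : ℕ → Matrix (Fin k) (Fin k) ℚ :=
    fun j => Polynomial.aeval E ((X - 1) ^ j * (α * X ^ k)) with hZ
  have hEm : ∀ m, k ≤ m → E ^ m = ∑ j ∈ Finset.range k, ((m.choose j : ℚ)) • Z j := by
    intro m hm
    have hXm : ((X : Polynomial ℚ)) ^ m
        = X ^ m * (α * X ^ k) + (X ^ (m - k) * β) * (X ^ k * (X - 1) ^ k) := by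
      have h2 : (X : Polynomial ℚ) ^ (m - k) * X ^ k = X ^ m := by
        rw [← pow_add]
        congr 1
        omega
      calc (X : Polynomial ℚ) ^ m = X ^ m * (α * X ^ k + β * (X - 1) ^ k) := by
            rw [hαβ, mul_one]
        _ = X ^ m * (α * X ^ k) + X ^ m * (β * (X - 1) ^ k) := by ring
        _ = X ^ m * (α * X ^ k) + (X ^ (m - k) * β) * (X ^ k * (X - 1) ^ k) := by
            rw [← h2]; ring
    have hEmX : E ^ m = Polynomial.aeval E ((X : Polynomial ℚ) ^ m) := by
      rw [_root_.map_pow, Polynomial.aeval_X]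
    rw [hEmX, hXm, _root_.map_add, key0, add_zero]
    have hbin : ((X : Polynomial ℚ)) ^ m = ∑ j ∈ Finset.range (m + 1),
        (X - 1) ^ j * 1 ^ (m - j) * (m.choose j : Polynomial ℚ) := by
      have hb := add_pow (X - 1 : Polynomial ℚ) 1 m
      have hx : (X - 1 + 1 : Polynomial ℚ) = X := by ring
      rw [hx] at hb
      exact hb
    rw [hbin, Finset.sum_mul, _root_.map_sum]
    rw [← Finset.sum_range_add_sum_Ico _ (by omega : k ≤ m + 1)]
    have hIco : ∑ j ∈ Finset.Ico k (m + 1),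
        Polynomial.aeval E ((X - 1) ^ j * 1 ^ (m - j) * (m.choose j : Polynomial ℚ) * (α * X ^ k)) = 0 := by
      refine Finset.sum_eq_zero fun j hj => ?_
      have hkj : k ≤ j := (Finset.mem_Ico.mp hj).1
      have hsplit : ((X : Polynomial ℚ) - 1) ^ j = (X - 1) ^ (j - k) * (X - 1) ^ k := by
        rw [← pow_add]
        congr 1
        omega
      have hpoly : ((X : Polynomial ℚ) - 1) ^ j * 1 ^ (m - j) * (m.choose j : Polynomial ℚ) * (α * X ^ k)
          = ((X - 1) ^ (j - k) * (m.choose j : Polynomial ℚ) * α) * (X ^ k * (X - 1) ^ k) := by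
        rw [hsplit]; ring
      rw [hpoly]
      exact key0 _
    rw [hIco, add_zero]
    refine Finset.sum_congr rfl fun j hj => ?_
    have hpoly : ((X : Polynomial ℚ) - 1) ^ j * 1 ^ (m - j) * (m.choose j : Polynomial ℚ) * (α * X ^ k)
        = (m.choose j : ℚ) • ((X - 1) ^ j * (α * X ^ k)) := by
      rw [Polynomial.smul_eq_C_mul, Polynomial.C_eq_natCast]
      ring
    rw [hpoly, _root_.map_smul]
  -- final assembly in m
  set w : Fin k → ℚ := fun x => (((A ^ i) u x : ℕ) : ℚ) with hw
  set cc : ℕ → ℚ := fun j => ∑ x, w x * (Z j) x v with hcc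
  refine ⟨∑ j ∈ Finset.range k,
    Polynomial.C (cc j / (Nat.factorial j : ℚ)) * descPochhammer ℚ j, fun m hm => ?_⟩
  have hsum : (((A ^ (i + p * m)) u v : ℕ) : ℚ) = ∑ j ∈ Finset.range k, (m.choose j : ℚ) * cc j := by
    rw [F2 m]
    calc ∑ x, w x * (E ^ m) x v
        = ∑ x, w x * (∑ j ∈ Finset.range k, ((m.choose j : ℚ)) • Z j) x v := by rw [hEm m hm]
      _ = ∑ x, ∑ j ∈ Finset.range k, (m.choose j : ℚ) * (w x * (Z j) x v) := by
          refine Finset.sum_congr rfl fun x _ => ?_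
          rw [Matrix.sum_apply, Finset.mul_sum]
          refine Finset.sum_congr rfl fun j _ => ?_
          rw [Matrix.smul_apply, smul_eq_mul]
          ring
      _ = ∑ j ∈ Finset.range k, (m.choose j : ℚ) * cc j := by
          rw [Finset.sum_comm]
          refine Finset.sum_congr rfl fun j _ => ?_
          rw [hcc, Finset.mul_sum]
  rw [hsum, Polynomial.eval_finset_sum]
  refine Finset.sum_congr rfl fun j hj => ?_
  rw [Polynomial.eval_mul, Polynomial.eval_C,
    descPochhammer_eval_eq_descFactorial ℚ m j, Nat.descFactorial_eq_factorial_mul_choose]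
  have hjfac : ((Nat.factorial j : ℚ)) ≠ 0 := by
    exact_mod_cast (Nat.factorial_pos j).ne'
  push_cast
  field_simp




lemma loop_lemma (A : Matrix (Fin k) (Fin k) ℕ) (x : Fin k) (T : ℕ) (hT : 1 ≤ T)
    (h : 1 ≤ ((A ^ Nat.factorial k) ^ T) x x) : 1 ≤ (A ^ Nat.factorial k) x x := by
  have hp : 1 ≤ Nat.factorial k := Nat.one_le_iff_ne_zero.mpr (Nat.factorial_ne_zero k)
  have h' : 1 ≤ (A ^ (Nat.factorial k * T)) x x := by rwa [pow_mul]
  obtain ⟨ℓ, hℓ1, hℓk, hℓ⟩ := short_cycle A x (Nat.factorial k * T)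
    (one_le_mul' hp hT) h'
  have hdvd : ℓ ∣ Nat.factorial k := Nat.dvd_factorial hℓ1 hℓk
  calc 1 ≤ ((A ^ ℓ) x x) ^ (Nat.factorial k / ℓ) :=
        Nat.one_le_iff_ne_zero.mpr (pow_ne_zero _ (by omega))
    _ ≤ (A ^ (ℓ * (Nat.factorial k / ℓ))) x x := diag_pow_le ..
    _ = (A ^ Nat.factorial k) x x := by rw [Nat.mul_div_cancel' hdvd]

end PORCAux

/-- every entry of the powers of a nonnegative integer matrix is an
ultimately almost PORC function of the exponent. -/
theorem matrix_power_entry_ultAlmostPORC (k : ℕ) (hk : 1 ≤ k)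
    (A : Matrix (Fin k) (Fin k) ℕ) (u v : Fin k) :
    UltAlmostPORC (fun n => (A ^ n) u v) := by
  classical
  set p := Nat.factorial k with hp
  have hp1 : 1 ≤ p := Nat.one_le_iff_ne_zero.mpr (Nat.factorial_ne_zero k)
  obtain ⟨B, hB1, hBbd⟩ := PORCAux.global_bound A
  have KEY : ∀ i, i < p →
      (∃ q : Polynomial ℚ, ∀ n, p * (k + 1) ≤ n → n % p = i →
        (((A ^ n) u v : ℕ) : ℚ) = q.eval (n : ℚ))
      ∨ ExpThetaQ (fun n => if n % p = i then (((A ^ n) u v : ℕ) : ℚ) else 2 ^ n) := by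
    intro i hi
    by_cases hexp : ∃ x : Fin k,
        ((∃ a, 1 ≤ (A ^ (i + p * a)) u x) ∧ (∃ b, 1 ≤ ((A ^ p) ^ b) x v)) ∧
        ∃ t, 1 ≤ t ∧ 2 ≤ ((A ^ p) ^ t) x x
    · right
      obtain ⟨x, ⟨⟨a, hax⟩, ⟨b, hbx⟩⟩, t, ht1, ht2⟩ := hexp
      have hloopx : 1 ≤ (A ^ p) x x :=
        PORCAux.loop_lemma A x t ht1 (le_trans one_le_two ht2)
      exact PORCAux.exp_branch A u v i hi x a b t ht1 hax
        (by rw [pow_mul]; exact hbx) (by rw [pow_mul]; exact ht2) hloopx B hB1 hBbd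
    · left
      push_neg at hexp
      have hdiag : ∀ x : Fin k,
          ((∃ a, 1 ≤ (A ^ (i + p * a)) u x) ∧ (∃ b, 1 ≤ ((A ^ p) ^ b) x v)) →
          ∀ t, 1 ≤ t → ((A ^ p) ^ t) x x ≤ 1 := by
        intro x hx t ht
        have := hexp x hx t ht
        omega
      obtain ⟨q0, hq0⟩ := PORCAux.poly_branch A u v i hdiag
        (fun x T hT h => PORCAux.loop_lemma A x T hT h)
      refine ⟨q0.comp (Polynomial.C (1 / (p : ℚ)) * (Polynomial.X - Polynomial.C (i : ℚ))),
        ?_⟩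
      intro n hn hni
      set m := n / p with hm
      have hnm : n = i + p * m := by
        conv_lhs => rw [← Nat.mod_add_div n p]
        rw [hni, hm]
      have hmk : k ≤ m := by
        have h1 : (k + 1) * p ≤ n := by
          calc (k + 1) * p = p * (k + 1) := by ring
            _ ≤ n := hn
        have h2 := (Nat.le_div_iff_mul_le (by omega : 0 < p)).mpr h1
        omega
      have hpQ : ((p : ℚ)) ≠ 0 := by
        have : (0 : ℚ) < p := by exact_mod_cast hp1
        linarith
      have heval : Polynomial.eval (n : ℚ)
          (Polynomial.C (1 / (p : ℚ)) * (Polynomial.X - Polynomial.C (i : ℚ))) = (m : ℚ) := by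
        have hq : ((n : ℚ)) = i + p * m := by exact_mod_cast hnm
        rw [Polynomial.eval_mul, Polynomial.eval_C, Polynomial.eval_sub, Polynomial.eval_X,
          Polynomial.eval_C, hq]
        field_simp
        ring
      rw [Polynomial.eval_comp, heval, ← hq0 m hmk, hnm]
  refine ⟨p, hp1, p * (k + 1), fun i n =>
    if h : ∃ q : Polynomial ℚ, ∀ n', p * (k + 1) ≤ n' → n' % p = i →
        (((A ^ n') u v : ℕ) : ℚ) = q.eval (n' : ℚ)
    then h.choose.eval (n : ℚ)
    else (if n % p = i then (((A ^ n) u v : ℕ) : ℚ) else 2 ^ n), ?_, ?_⟩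
  · intro i hi
    by_cases h : ∃ q : Polynomial ℚ, ∀ n', p * (k + 1) ≤ n' → n' % p = i →
        (((A ^ n') u v : ℕ) : ℚ) = q.eval (n' : ℚ)
    · left
      exact ⟨h.choose, fun n => by simp only [dif_pos h]⟩
    · right
      have hkey := (KEY i hi).resolve_left h
      simpa only [dif_neg h] using hkey
  · intro n hn
    show (((A ^ n) u v : ℕ) : ℚ) = _
    by_cases h : ∃ q : Polynomial ℚ, ∀ n', p * (k + 1) ≤ n' → n' % p = (n % p) →
        (((A ^ n') u v : ℕ) : ℚ) = q.eval (n' : ℚ)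
    · simp only [dif_pos h]
      exact h.choose_spec n hn rfl
    · simp only [dif_neg h, if_true]
end

section
/- Let φ ∈ ℚ[x₁, …, x_m] be written in the binomial basis as φ = Σ_{i=1}^{r} a_i · Π_{j=1}^{m} C(x_j, d_{i,j}) with all a_i ∈ ℤ and pairwise distinct degree vectors (d_{i,1}, …, d_{i,m}), and suppose the coefficient of every dominating term of φ is positive. Then there exist r′ ∈ ℕ, coefficients a′_1, …, a′_{r′} ∈ ℕ, shifts c_1, …, c_{r′} ∈ ℕ, and degree vectors (d′_{i,1}, …, d′_{i,m}) ∈ ℕ^m such that, as polynomials, φ = Σ_{i=1}^{r′} a′_i · Π_{j=1}^{m} C(x_j − c_i, d′_{i,j}). -/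
open Polynomial MvPolynomial

/-- The binomial polynomial `C(x, c) = x(x−1)⋯(x−c+1)/c! ∈ ℚ[x]`. -/
noncomputable def binPoly (c : ℕ) : Polynomial ℚ :=
  Polynomial.C ((Nat.factorial c : ℚ)⁻¹) * descPochhammer ℚ c

/-- The product `Π_j C(x_j − s, d_j)` of shifted binomial polynomials,
as a multivariate polynomial in `x₁, …, x_m`. -/
noncomputable def shiftedBinProd (m : ℕ) (s : ℕ) (d : Fin m → ℕ) :
    MvPolynomial (Fin m) ℚ :=
  ∏ j : Fin m, Polynomial.aeval (MvPolynomial.X j - MvPolynomial.C ((s : ℕ) : ℚ)) (binPoly (d j))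

lemma binPoly_eval_nat (c n : ℕ) : (binPoly c).eval ((n : ℚ)) = n.choose c := by
  rw [binPoly, Polynomial.eval_mul, Polynomial.eval_C, descPochhammer_eval_eq_descFactorial,
    Nat.descFactorial_eq_factorial_mul_choose]
  push_cast
  rw [← mul_assoc, inv_mul_cancel₀ (by exact_mod_cast c.factorial_ne_zero), one_mul]

lemma binPoly_shift (N c : ℕ) : binPoly c = ∑ e ∈ Finset.range (c+1),
    (N.choose (c - e) : ℚ) • ((binPoly e).comp (Polynomial.X - Polynomial.C (N:ℚ))) := by
  apply Polynomial.eq_of_infinite_eval_eq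
  apply Set.Infinite.mono (s := Set.range (fun n : ℕ => ((N + n : ℕ) : ℚ)))
  · rintro x ⟨n, rfl⟩
    simp only [Set.mem_setOf_eq, Polynomial.eval_finset_sum, Polynomial.eval_smul,
      Polynomial.eval_comp, Polynomial.eval_sub, Polynomial.eval_X, Polynomial.eval_C,
      binPoly_eval_nat, smul_eq_mul]
    have h1 : ((N + n : ℕ) : ℚ) - (N : ℚ) = (n : ℚ) := by push_cast; ring
    rw [h1]
    simp only [binPoly_eval_nat]
    rw [Nat.add_choose_eq]
    push_cast
    rw [Finset.Nat.sum_antidiagonal_eq_sum_range_succ (fun i j => (N.choose i * n.choose j : ℚ))]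
    rw [← Finset.sum_range_reflect]
    apply Finset.sum_congr rfl
    intro e he
    simp only [Finset.mem_range] at he
    have h2 : c.succ - 1 - e = c - e := by omega
    rw [h2, Nat.sub_sub_self (Nat.lt_succ_iff.mp he)]
  · apply Set.infinite_range_of_injective
    intro x y h
    simpa using h

lemma shiftedBinProd_zero_eq (m N : ℕ) (dv : Fin m → ℕ) :
    shiftedBinProd m 0 dv = ∑ e ∈ Fintype.piFinset (fun j => Finset.range (dv j + 1)),
      ((∏ j, N.choose (dv j - e j) : ℕ) : ℚ) • shiftedBinProd m N e := by
  unfold shiftedBinProd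
  have step : ∀ j : Fin m, Polynomial.aeval (MvPolynomial.X j - MvPolynomial.C (((0:ℕ) : ℚ))) (binPoly (dv j))
      = ∑ e ∈ Finset.range (dv j + 1), (N.choose (dv j - e) : ℚ) •
          Polynomial.aeval (MvPolynomial.X j - MvPolynomial.C ((N:ℕ) : ℚ)) (binPoly e) := by
    intro j
    rw [binPoly_shift N (dv j), map_sum]
    apply Finset.sum_congr rfl
    intro e _
    rw [map_smul, Polynomial.aeval_comp]
    congr 2
    simp [Algebra.algebraMap_eq_smul_one, MvPolynomial.smul_eq_C_mul]
  calc ∏ j : Fin m, Polynomial.aeval (MvPolynomial.X j - MvPolynomial.C (((0:ℕ) : ℚ))) (binPoly (dv j))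
      = ∏ j : Fin m, ∑ e ∈ Finset.range (dv j + 1), (N.choose (dv j - e) : ℚ) •
          Polynomial.aeval (MvPolynomial.X j - MvPolynomial.C ((N:ℕ) : ℚ)) (binPoly e) := by
        exact Finset.prod_congr rfl (fun j _ => step j)
    _ = ∑ e ∈ Fintype.piFinset (fun j => Finset.range (dv j + 1)),
          ∏ j : Fin m, (N.choose (dv j - e j) : ℚ) •
          Polynomial.aeval (MvPolynomial.X j - MvPolynomial.C ((N:ℕ) : ℚ)) (binPoly (e j)) := by
        exact Finset.prod_univ_sum _ _
    _ = _ := by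
        apply Finset.sum_congr rfl
        intro e _
        simp only [MvPolynomial.smul_eq_C_mul, Finset.prod_mul_distrib, ← map_prod,
          Nat.cast_prod]

lemma choose_le_pow' (n k : ℕ) : n.choose k ≤ n ^ k := by
  calc n.choose k ≤ k.factorial * n.choose k := Nat.le_mul_of_pos_left _ k.factorial_pos
    _ = n.descFactorial k := (Nat.descFactorial_eq_factorial_mul_choose n k).symm
    _ ≤ n ^ k := Nat.descFactorial_le_pow n k

lemma key_pos (m r D : ℕ) (a : Fin r → ℤ) (d : Fin r → Fin m → ℕ)
    (hd : Function.Injective d)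
    (hdom : ∀ i : Fin r, a i ≠ 0 →
      (∀ i' : Fin r, i' ≠ i → a i' ≠ 0 → ¬ (∀ j, d i j ≤ d i' j)) → 0 < a i)
    (hD : ∀ i j, d i j ≤ D) :
    ∃ N : ℕ, ∀ e : Fin m → ℕ,
      0 ≤ ∑ i, a i * (if ∀ j, e j ≤ d i j then ((∏ j, N.choose (d i j - e j) : ℕ) : ℤ) else 0) := by
  classical
  set A : ℕ := ∑ i, (a i).natAbs with hA
  set N : ℕ := 2^(m*D) * (D.factorial)^m * A + 2*D + 1 with hN
  refine ⟨N, ?_⟩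
  intro e
  set w : Fin r → ℕ := fun i => ∏ j, N.choose (d i j - e j) with hw
  set S : Finset (Fin r) := Finset.univ.filter (fun i => a i ≠ 0 ∧ ∀ j, e j ≤ d i j) with hS
  have hsum : ∑ i, a i * (if ∀ j, e j ≤ d i j then ((∏ j, N.choose (d i j - e j) : ℕ) : ℤ) else 0)
      = ∑ i ∈ S, a i * (w i : ℤ) := by
    rw [← Finset.sum_subset (Finset.subset_univ S) ?_]
    · apply Finset.sum_congr rfl
      intro i hi
      rw [hS, Finset.mem_filter] at hi
      rw [if_pos hi.2.2]
    · intro i _ hiS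
      rw [hS, Finset.mem_filter] at hiS
      by_cases ha : a i = 0
      · rw [ha, zero_mul]
      · rw [if_neg (fun hcon => hiS ⟨Finset.mem_univ i, ha, hcon⟩), mul_zero]
  rw [hsum]
  rcases S.eq_empty_or_nonempty with hSe | hne
  · simp [hSe]
  obtain ⟨i₀, hi₀S, hi₀⟩ := Finset.exists_mem_eq_sup S hne (fun i => ∑ j, (d i j - e j))
  set t := S.sup (fun i => ∑ j, (d i j - e j)) with ht
  set T := S.filter (fun i => (∑ j, (d i j - e j)) = t) with hT
  have hi₀T : i₀ ∈ T := by rw [hT, Finset.mem_filter]; exact ⟨hi₀S, hi₀.symm⟩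
  -- every member of T has positive coefficient
  have hTpos : ∀ i ∈ T, 0 < a i := by
    intro i hi
    rw [hT, Finset.mem_filter] at hi
    obtain ⟨hiS, hit⟩ := hi
    rw [hS, Finset.mem_filter] at hiS
    obtain ⟨-, hia, hie⟩ := hiS
    apply hdom i hia
    intro i' hne' ha' hle
    have hi'S : i' ∈ S := by
      rw [hS, Finset.mem_filter]
      exact ⟨Finset.mem_univ _, ha', fun j => le_trans (hie j) (hle j)⟩
    have h1 : (∑ j, (d i' j - e j)) ≤ t :=
      Finset.le_sup (f := fun i => ∑ j, (d i j - e j)) hi'S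
    have hne_d : d i ≠ d i' := fun hh => hne' ((hd hh).symm)
    have hex : ∃ j, d i j < d i' j := by
      by_contra hcon
      push_neg at hcon
      exact hne_d (funext fun j => le_antisymm (hle j) (hcon j))
    obtain ⟨j₀, hj₀⟩ := hex
    have hlt : (∑ j, (d i j - e j)) < ∑ j, (d i' j - e j) := by
      apply Finset.sum_lt_sum (fun j _ => Nat.sub_le_sub_right (hle j) _)
      exact ⟨j₀, Finset.mem_univ _, by have := hie j₀; omega⟩
    omega
  -- split the sum
  rw [← Finset.sum_filter_add_sum_filter_not S (fun i => (∑ j, (d i j - e j)) = t)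
    (fun i => a i * (w i : ℤ)), ← hT]
  set S2 := S.filter (fun i => ¬ (∑ j, (d i j - e j)) = t) with hS2
  have hTsum : (w i₀ : ℤ) ≤ ∑ i ∈ T, a i * (w i : ℤ) := by
    have h0 : ∀ i ∈ T, (0:ℤ) ≤ a i * (w i : ℤ) :=
      fun i hi => mul_nonneg (le_of_lt (hTpos i hi)) (by positivity)
    calc (w i₀ : ℤ) ≤ a i₀ * (w i₀ : ℤ) :=
          le_mul_of_one_le_left (by positivity) (hTpos i₀ hi₀T)
      _ ≤ ∑ i ∈ T, a i * (w i : ℤ) := Finset.single_le_sum h0 hi₀T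
  rcases S2.eq_empty_or_nonempty with hS2e | ⟨i₁, hi₁⟩
  · rw [hS2e, Finset.sum_empty, add_zero]
    calc (0:ℤ) ≤ (w i₀ : ℤ) := by positivity
      _ ≤ _ := hTsum
  -- t ≥ 1
  have ht1 : 1 ≤ t := by
    rw [hS2, Finset.mem_filter] at hi₁
    have h9 : (∑ j, (d i₁ j - e j)) ≤ t :=
      Finset.le_sup (f := fun i => ∑ j, (d i j - e j)) hi₁.1
    have h8 : (∑ j, (d i₁ j - e j)) ≠ t := hi₁.2
    omega
  -- a bound on low-order terms
  have hS2bound : ∀ i ∈ S2, -(((a i).natAbs : ℤ) * (N:ℤ)^(t-1)) ≤ a i * (w i : ℤ) := by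
    intro i hi
    rw [hS2, Finset.mem_filter] at hi
    have hle : (∑ j, (d i j - e j)) ≤ t :=
      Finset.le_sup (f := fun i => ∑ j, (d i j - e j)) hi.1
    have hlt : (∑ j, (d i j - e j)) ≤ t - 1 := by omega
    have hwle : w i ≤ N^(t-1) := by
      calc w i ≤ ∏ j, N ^ (d i j - e j) :=
            Finset.prod_le_prod' (fun j _ => choose_le_pow' N _)
        _ = N ^ (∑ j, (d i j - e j)) := Finset.prod_pow_eq_pow_sum _ _ _
        _ ≤ N ^ (t-1) := Nat.pow_le_pow_right (by omega) hlt
    have habs : |a i * (w i:ℤ)| ≤ ((a i).natAbs : ℤ) * (N:ℤ)^(t-1) := by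
      rw [abs_mul, Int.abs_eq_natAbs, abs_of_nonneg (by positivity : (0:ℤ) ≤ (w i : ℤ))]
      apply mul_le_mul_of_nonneg_left _ (by positivity)
      exact_mod_cast hwle
    linarith [neg_abs_le (a i * (w i : ℤ))]
  have hS2sum : -((A:ℤ) * (N:ℤ)^(t-1)) ≤ ∑ i ∈ S2, a i * (w i : ℤ) := by
    have h6 : ∑ i ∈ S2, (((a i).natAbs : ℤ) * (N:ℤ)^(t-1)) ≤ (A:ℤ) * (N:ℤ)^(t-1) := by
      rw [← Finset.sum_mul]
      apply mul_le_mul_of_nonneg_right _ (by positivity)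
      have h7 : ∑ i ∈ S2, (a i).natAbs ≤ A :=
        Finset.sum_le_sum_of_subset (Finset.subset_univ S2)
      exact_mod_cast h7
    calc -((A:ℤ) * (N:ℤ)^(t-1)) ≤ -(∑ i ∈ S2, (((a i).natAbs : ℤ) * (N:ℤ)^(t-1))) :=
          neg_le_neg h6
      _ = ∑ i ∈ S2, -(((a i).natAbs : ℤ) * (N:ℤ)^(t-1)) := (Finset.sum_neg_distrib _).symm
      _ ≤ _ := Finset.sum_le_sum hS2bound
  -- the key inequality: A * N^(t-1) ≤ w i₀
  have hkey : A * N^(t-1) ≤ w i₀ := by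
    have hkD : ∀ j, (d i₀ j - e j) ≤ D := fun j => le_trans (Nat.sub_le _ _) (hD i₀ j)
    have htmD : t ≤ m * D := by
      rw [hi₀]
      calc (∑ j, (d i₀ j - e j)) ≤ ∑ _j : Fin m, D := Finset.sum_le_sum (fun j _ => hkD j)
        _ = m * D := by rw [Finset.sum_const, Finset.card_univ, Fintype.card_fin, smul_eq_mul]
    have h1 : (N - D)^t ≤ D.factorial^m * w i₀ := by
      calc (N - D)^t = ∏ j, (N - D)^(d i₀ j - e j) := by
            rw [Finset.prod_pow_eq_pow_sum, ← hi₀]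
        _ ≤ ∏ j, N.descFactorial (d i₀ j - e j) := by
            apply Finset.prod_le_prod'
            intro j _
            calc (N - D)^(d i₀ j - e j) ≤ (N + 1 - (d i₀ j - e j))^(d i₀ j - e j) := by
                  apply Nat.pow_le_pow_left; have := hkD j; omega
              _ ≤ N.descFactorial (d i₀ j - e j) := Nat.pow_sub_le_descFactorial N _
        _ ≤ ∏ j, (D.factorial * N.choose (d i₀ j - e j)) := by
            apply Finset.prod_le_prod'
            intro j _
            rw [Nat.descFactorial_eq_factorial_mul_choose]
            exact Nat.mul_le_mul_right _ (Nat.factorial_le (hkD j))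
        _ = D.factorial^m * w i₀ := by
            rw [Finset.prod_mul_distrib, Finset.prod_const, Finset.card_univ, Fintype.card_fin, hw]
    have h2 : N ≤ 2 * (N - D) := by omega
    have h3 : N^t ≤ 2^t * (N - D)^t := by
      calc N^t ≤ (2 * (N - D))^t := Nat.pow_le_pow_left h2 t
        _ = 2^t * (N - D)^t := mul_pow _ _ _
    have h4 : 2^t * D.factorial^m * A ≤ N := by
      have h5 : 2^t ≤ 2^(m*D) := Nat.pow_le_pow_right (by norm_num) htmD
      calc 2^t * D.factorial^m * A ≤ 2^(m*D) * D.factorial^m * A := by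
            exact Nat.mul_le_mul_right _ (Nat.mul_le_mul_right _ h5)
        _ ≤ N := by rw [hN]; omega
    have hmul : (2^t * D.factorial^m) * (A * N^(t-1)) ≤ (2^t * D.factorial^m) * w i₀ := by
      calc (2^t * D.factorial^m) * (A * N^(t-1)) = (2^t * D.factorial^m * A) * N^(t-1) := by ring
        _ ≤ N * N^(t-1) := Nat.mul_le_mul_right _ h4
        _ = N^t := by rw [← pow_succ']; congr 1; omega
        _ ≤ 2^t * (N - D)^t := h3
        _ ≤ 2^t * (D.factorial^m * w i₀) := Nat.mul_le_mul_left _ h1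
        _ = (2^t * D.factorial^m) * w i₀ := by ring
    exact Nat.le_of_mul_le_mul_left hmul (by positivity)
  have hkey' : (A:ℤ) * (N:ℤ)^(t-1) ≤ (w i₀ : ℤ) := by exact_mod_cast hkey
  linarith

/-- if `φ` is written in the (multivariate) binomial basis with integer
coefficients and pairwise distinct degree vectors, and every dominating term has a
positive coefficient, then `φ` is a nonnegative integer combination of products of
shifted binomial polynomials. -/
theorem shifted_binomial_basis_multivariate (m r : ℕ)
    (a : Fin r → ℤ) (d : Fin r → Fin m → ℕ) (hd : Function.Injective d)
    (hdom : ∀ i : Fin r, a i ≠ 0 →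
      (∀ i' : Fin r, i' ≠ i → a i' ≠ 0 → ¬ (∀ j, d i j ≤ d i' j)) → 0 < a i)
    (φ : MvPolynomial (Fin m) ℚ)
    (hφ : φ = ∑ i : Fin r, (a i : ℚ) • shiftedBinProd m 0 (d i)) :
    ∃ (r' : ℕ) (a' : Fin r' → ℕ) (c : Fin r' → ℕ) (d' : Fin r' → Fin m → ℕ),
      φ = ∑ i : Fin r', (a' i : ℚ) • shiftedBinProd m (c i) (d' i) := by
  classical
  set D : ℕ := Finset.univ.sup (fun i => Finset.univ.sup (d i)) with hDdef
  have hD : ∀ i j, d i j ≤ D :=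
    fun i j => le_trans (Finset.le_sup (Finset.mem_univ j))
      (Finset.le_sup (f := fun i => Finset.univ.sup (d i)) (Finset.mem_univ i))
  obtain ⟨N, hN⟩ := key_pos m r D a d hd hdom hD
  set E : Finset (Fin m → ℕ) := Fintype.piFinset (fun _ => Finset.range (D + 1)) with hE
  set g : (Fin m → ℕ) → ℤ := fun e => ∑ i, a i *
    (if ∀ j, e j ≤ d i j then ((∏ j, N.choose (d i j - e j) : ℕ) : ℤ) else 0) with hg
  -- step 1: φ as a sum over E
  have hstep : φ = ∑ e ∈ E, ((g e : ℤ) : ℚ) • shiftedBinProd m N e := by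
    rw [hφ]
    have hterm : ∀ i : Fin r, shiftedBinProd m 0 (d i) =
        ∑ e ∈ E, (if ∀ j, e j ≤ d i j then ((∏ j, N.choose (d i j - e j) : ℕ) : ℚ) else 0) •
          shiftedBinProd m N e := by
      intro i
      rw [shiftedBinProd_zero_eq m N (d i)]
      rw [Finset.sum_congr rfl (fun e he => ?_)]
      · apply Finset.sum_subset
        · intro e he
          rw [Fintype.mem_piFinset] at he ⊢
          intro j
          simp only [Finset.mem_range] at he ⊢
          exact lt_of_lt_of_le (he j) (by have := hD i j; omega)
        · intro e _ heni
          rw [Fintype.mem_piFinset] at heni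
          push_neg at heni
          obtain ⟨j, hj⟩ := heni
          rw [Finset.mem_range] at hj
          rw [if_neg, zero_smul]
          intro hcon
          exact hj (by have := hcon j; omega)
      · rw [Fintype.mem_piFinset] at he
        simp only [Finset.mem_range] at he
        rw [if_pos (fun j => by have := he j; omega)]
    calc ∑ i : Fin r, (a i : ℚ) • shiftedBinProd m 0 (d i)
        = ∑ i : Fin r, ∑ e ∈ E, ((a i : ℚ) *
            (if ∀ j, e j ≤ d i j then ((∏ j, N.choose (d i j - e j) : ℕ) : ℚ) else 0)) •
            shiftedBinProd m N e := by
          apply Finset.sum_congr rfl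
          intro i _
          rw [hterm i, Finset.smul_sum]
          exact Finset.sum_congr rfl (fun e _ => by rw [smul_smul])
      _ = ∑ e ∈ E, (∑ i : Fin r, (a i : ℚ) *
            (if ∀ j, e j ≤ d i j then ((∏ j, N.choose (d i j - e j) : ℕ) : ℚ) else 0)) •
            shiftedBinProd m N e := by
          rw [Finset.sum_comm]
          exact Finset.sum_congr rfl (fun e _ => (Finset.sum_smul).symm)
      _ = _ := by
          apply Finset.sum_congr rfl
          intro e _
          congr 1
          rw [hg]
          push_cast
          rfl
  -- step 2: reindex
  set σ : (Fin m → Fin (D + 1)) ≃ Fin ((D + 1) ^ m) := Fintype.equivFinOfCardEq (by simp) with hσ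
  set ε : Fin ((D + 1) ^ m) → (Fin m → ℕ) := fun k j => ((σ.symm k j : ℕ)) with hε
  refine ⟨(D + 1) ^ m, fun k => (g (ε k)).toNat, fun _ => N, ε, ?_⟩
  rw [hstep]
  refine Eq.trans ?_ (Equiv.sum_comp σ.symm
    (fun v : Fin m → Fin (D + 1) => ((g (fun j => (v j : ℕ))).toNat : ℚ) •
      shiftedBinProd m N (fun j => (v j : ℕ)))).symm
  apply Finset.sum_nbij' (i := fun (e : Fin m → ℕ) => (fun j => (⟨min (e j) D, by omega⟩ : Fin (D+1))))
    (j := fun (v : Fin m → Fin (D+1)) => (fun j => (v j : ℕ)))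
  · intro e _; exact Finset.mem_univ _
  · intro v _
    rw [hE, Fintype.mem_piFinset]
    intro j
    rw [Finset.mem_range]
    exact (v j).2
  · intro e he
    rw [hE, Fintype.mem_piFinset] at he
    simp only [Finset.mem_range] at he
    funext j
    have := he j
    simp only [min_eq_left (by omega : e j ≤ D)]
  · intro v _
    funext j
    have := (v j).2
    exact Fin.ext (by simp [min_eq_left (by omega : ((v j) : ℕ) ≤ D)])
  · intro e he
    rw [hE, Fintype.mem_piFinset] at he
    simp only [Finset.mem_range] at he
    have hee : (fun j => ((min (e j) D : ℕ))) = e := by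
      funext j
      have := he j
      exact min_eq_left (by omega)
    simp only [hee]
    congr 1
    have h0 : (0:ℤ) ≤ g e := hN e
    have h1 : ((g e).toNat : ℤ) = g e := Int.toNat_of_nonneg h0
    exact_mod_cast h1.symm
end
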